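/- arXiv:0906.3247 — 5 statements merged into one kernel-verified Lean document; each statement's English description precedes it below -/
import Mathlib

section
/- Let n ≥ 1 and d ≥ 0 be integers, and let a, b : ℤ → ℕ be functions such that a is bounded below and a(i) ≤ b(i) + a(i − n) for all i ∈ ℤ. If b has polynomial growth of degree ≤ d, then a has polynomial growth of degree ≤ d + 1. (This is the numerical content of the paper's growth lemma: for a triangle Σₙ M → M → N with positive shift n, growth(M) ≤ growth(N) + 1, applied to a(i) = dim H^i(M) and b(i) = dim H^i(N).) -/
/-- A function `f : ℤ → ℕ` has polynomial growth of degree at most `d` if there is a real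
polynomial `p` of degree at most `d` with `f i ≤ p i` for all sufficiently large `i`. -/
def HasPolyGrowth (f : ℤ → ℕ) (d : ℕ) : Prop :=
  ∃ p : Polynomial ℝ, p.natDegree ≤ d ∧ ∃ N : ℤ, ∀ i : ℤ, N ≤ i → (f i : ℝ) ≤ p.eval (i : ℝ)

/-- A function `f : ℤ → ℕ` is bounded below if it vanishes in all sufficiently small degrees. -/
def BoundedBelowFun (f : ℤ → ℕ) : Prop :=
  ∃ i₀ : ℤ, ∀ i : ℤ, i < i₀ → f i = 0

/-- Growth lemma: for a triangle `Σₙ M → M → N` with shift `n ≥ 1`, the growth of `M` is at most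
one more than the growth of `N`. -/
theorem growth_le_succ_of_triangle (n : ℤ) (hn : 1 ≤ n) (d : ℕ) (a b : ℤ → ℕ)
    (ha : BoundedBelowFun a)
    (hab : ∀ i : ℤ, a i ≤ b i + a (i - n))
    (hb : HasPolyGrowth b d) :
    HasPolyGrowth a (d + 1) := by
  obtain ⟨i₀, hi₀⟩ := ha
  obtain ⟨p, hpd, N, hpN⟩ := hb
  set P : Polynomial ℝ :=
    ∑ k ∈ Finset.range (p.natDegree + 1), Polynomial.C |p.coeff k| * Polynomial.X ^ k with hP
  set C : ℝ := ∑ j ∈ Finset.Icc i₀ N, (b j : ℝ) with hC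
  have hC0 : 0 ≤ C := Finset.sum_nonneg fun j _ => Nat.cast_nonneg _
  have hCb : ∀ j : ℤ, i₀ ≤ j → j ≤ N → (b j : ℝ) ≤ C := fun j h1 h2 =>
    Finset.single_le_sum (f := fun j => (b j : ℝ)) (fun _ _ => Nat.cast_nonneg _)
      (Finset.mem_Icc.2 ⟨h1, h2⟩)
  have hPeval : ∀ t : ℝ, P.eval t = ∑ k ∈ Finset.range (p.natDegree + 1), |p.coeff k| * t ^ k := by
    intro t
    simp [hP, Polynomial.eval_finset_sum]
  have hPmono : ∀ s t : ℝ, 0 ≤ s → s ≤ t → P.eval s ≤ P.eval t := by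
    intro s t hs hst
    rw [hPeval, hPeval]
    apply Finset.sum_le_sum
    intro k _
    exact mul_le_mul_of_nonneg_left (pow_le_pow_left₀ hs hst k) (abs_nonneg _)
  have hPbound : ∀ t : ℝ, p.eval t ≤ P.eval |t| := by
    intro t
    rw [hPeval, Polynomial.eval_eq_sum_range]
    apply Finset.sum_le_sum
    intro k _
    calc p.coeff k * t ^ k ≤ |p.coeff k * t ^ k| := le_abs_self _
      _ = |p.coeff k| * |t| ^ k := by rw [abs_mul, abs_pow]
  have hP0 : ∀ t : ℝ, 0 ≤ t → 0 ≤ P.eval t := by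
    intro t ht
    rw [hPeval]
    exact Finset.sum_nonneg fun k _ => mul_nonneg (abs_nonneg _) (pow_nonneg ht k)
  have hPdeg : P.natDegree ≤ d := by
    refine (Polynomial.natDegree_sum_le_of_forall_le _ _ ?_).trans hpd
    intro k hk
    refine (Polynomial.natDegree_mul_le).trans ?_
    simp only [Polynomial.natDegree_C, Polynomial.natDegree_X_pow, zero_add]
    exact Nat.lt_succ_iff.mp (Finset.mem_range.mp hk)
  refine ⟨(Polynomial.X + Polynomial.C (1 - (i₀ : ℝ))) * (P + Polynomial.C C), ?_, ?_⟩
  · refine (Polynomial.natDegree_mul_le).trans ?_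
    have h1 : (Polynomial.X + Polynomial.C (1 - (i₀ : ℝ))).natDegree ≤ 1 :=
      le_of_eq (Polynomial.natDegree_X_add_C _)
    have h2 : (P + Polynomial.C C).natDegree ≤ d := by
      refine (Polynomial.natDegree_add_le _ _).trans ?_
      simp [hPdeg]
    omega
  · refine ⟨max (|i₀| + 1) N, ?_⟩
    intro j hj
    have hji : |i₀| + 1 ≤ j := le_trans (le_max_left _ _) hj
    have hNj : N ≤ j := le_trans (le_max_right _ _) hj
    have habs := neg_abs_le i₀
    have habs' := le_abs_self i₀
    have hji₀ : i₀ ≤ j := by linarith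
    have hj0 : (0 : ℤ) ≤ j := by linarith [abs_nonneg i₀]
    set D : ℝ := P.eval (j : ℝ) + C with hD
    have hD0 : 0 ≤ D := add_nonneg (hP0 _ (by exact_mod_cast hj0)) hC0
    have key : ∀ m : ℕ, ∀ i : ℤ, i < i₀ + m → i ≤ j → (a i : ℝ) ≤ m * D := by
      intro m
      induction m with
      | zero =>
        intro i h1 _
        simp [hi₀ i (by simpa using h1)]
      | succ m ih =>
        intro i h1 h2
        by_cases hcase : i < i₀
        · simp only [hi₀ i hcase, Nat.cast_zero]
          positivity
        · push_neg at hcase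
          have hbi : (b i : ℝ) ≤ D := by
            by_cases hN : N ≤ i
            · have hb1 := hpN i hN
              have h4 : p.eval (i : ℝ) ≤ P.eval (j : ℝ) := by
                refine (hPbound _).trans (hPmono _ _ (abs_nonneg _) ?_)
                rw [← Int.cast_abs]
                have : |i| ≤ j := by
                  rw [abs_le]
                  constructor
                  · linarith
                  · exact h2
                exact_mod_cast this
              have := hP0 (j : ℝ) (by exact_mod_cast hj0)
              linarith
            · push_neg at hN
              have := hCb i hcase hN.le
              linarith [hP0 (j : ℝ) (by exact_mod_cast hj0)]
          have hai : (a (i - n) : ℝ) ≤ m * D := ih _ (by omega) (by omega)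
          have h3 : (a i : ℝ) ≤ (b i : ℝ) + (a (i - n) : ℝ) := by exact_mod_cast hab i
          calc (a i : ℝ) ≤ (b i : ℝ) + (a (i - n) : ℝ) := h3
            _ ≤ D + m * D := add_le_add hbi hai
            _ = (↑(m + 1) : ℕ) * D := by push_cast; ring
    have hm : j < i₀ + ((j - i₀ + 1).toNat : ℤ) := by omega
    have hkey := key (j - i₀ + 1).toNat j hm le_rfl
    have hcast : (((j - i₀ + 1).toNat : ℕ) : ℝ) = (j : ℝ) - i₀ + 1 := by
      have h := Int.toNat_of_nonneg (show (0:ℤ) ≤ j - i₀ + 1 by omega)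
      rw [show (((j - i₀ + 1).toNat : ℕ) : ℝ) = (((j - i₀ + 1).toNat : ℤ) : ℝ) by push_cast; ring,
        h]
      push_cast
      ring
    rw [hcast] at hkey
    calc (a j : ℝ) ≤ ((j : ℝ) - i₀ + 1) * D := hkey
      _ = Polynomial.eval (j : ℝ) ((Polynomial.X + Polynomial.C (1 - (i₀ : ℝ))) *
          (P + Polynomial.C C)) := by
        simp only [hD, Polynomial.eval_mul, Polynomial.eval_add, Polynomial.eval_X,
          Polynomial.eval_C]
        ring
end

section
/- Let n ≥ 1 and d ≥ 0 be integers and let b : ℤ → ℕ be a function that is bounded below and has polynomial growth of degree ≤ d. Then the function i ↦ Σ_{j ≥ 0} b(i − jn) (a finite sum for each i, since b is bounded below) has polynomial growth of degree ≤ d + 1. -/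
/-- If `b : ℤ → ℕ` is bounded below with polynomial growth of degree at most `d` and `n ≥ 1`,
then `i ↦ ∑_{j ≥ 0} b (i - j n)` (a finite sum for each `i`, since `b` is bounded below)
has polynomial growth of degree at most `d + 1`. -/
theorem polyGrowth_sum (n : ℤ) (hn : 1 ≤ n) (d : ℕ) (b : ℤ → ℕ)
    (hbdd : BoundedBelowFun b) (hb : HasPolyGrowth b d) :
    HasPolyGrowth (fun i : ℤ => ∑' j : ℕ, b (i - (j : ℤ) * n)) (d + 1) := by
  obtain ⟨i₀, hi₀⟩ := hbdd
  obtain ⟨p, hpd, N, hpN⟩ := hb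
  set C : ℕ := (Finset.Icc i₀ N).sup b with hC
  set P : Polynomial ℝ :=
    Polynomial.C (C : ℝ) + ∑ k ∈ Finset.range (d+1), Polynomial.C |p.coeff k| * Polynomial.X ^ k
    with hP
  set Q : Polynomial ℝ := (Polynomial.X + Polynomial.C (|(i₀ : ℝ)| + 1)) * P with hQ
  -- P has nonneg values at nonneg points
  have hPpos : ∀ x : ℝ, 0 ≤ x → 0 ≤ P.eval x := by
    intro x hx
    simp only [hP, Polynomial.eval_add, Polynomial.eval_C, Polynomial.eval_finset_sum,
      Polynomial.eval_mul, Polynomial.eval_pow, Polynomial.eval_X]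
    positivity
  have hPdeg : P.natDegree ≤ d := by
    apply le_trans (Polynomial.natDegree_add_le _ _)
    simp only [Polynomial.natDegree_C, max_le_iff]
    refine ⟨Nat.zero_le _, ?_⟩
    apply Polynomial.natDegree_sum_le_of_forall_le
    intro k hk
    apply le_trans (Polynomial.natDegree_mul_le)
    simp only [Polynomial.natDegree_C, Polynomial.natDegree_X_pow, zero_add]
    exact Nat.lt_succ_iff.mp (Finset.mem_range.mp hk)
  refine ⟨Q, ?_, max N (max |i₀| 1), ?_⟩
  · apply le_trans (Polynomial.natDegree_mul_le)
    have h1 : (Polynomial.X + Polynomial.C (|(i₀ : ℝ)| + 1)).natDegree ≤ 1 := by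
      apply le_trans (Polynomial.natDegree_add_le _ _)
      simp [Polynomial.natDegree_X]
    omega
  · intro i hi
    have hiN : N ≤ i := le_trans (le_max_left _ _) hi
    have hii₀ : |i₀| ≤ i := le_trans (le_max_left _ _) (le_trans (le_max_right _ _) hi)
    have hi1 : (1 : ℤ) ≤ i := le_trans (le_max_right _ _) (le_trans (le_max_right _ _) hi)
    have hiR : (0:ℝ) ≤ (i:ℝ) := by exact_mod_cast hi1.trans' (by norm_num)
    have hi₀le : i₀ ≤ i := le_trans (le_abs_self _) hii₀
    obtain ⟨m, hm⟩ : ∃ m : ℕ, (m : ℤ) = i - i₀ + 1 :=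
      ⟨(i - i₀ + 1).toNat, Int.toNat_of_nonneg (by omega)⟩
    -- the tsum is a finite sum
    have htsum : ∑' j : ℕ, b (i - (j : ℤ) * n) = ∑ j ∈ Finset.range m, b (i - (j : ℤ) * n) := by
      apply tsum_eq_sum
      intro j hj
      apply hi₀
      have hj' : m ≤ j := Nat.le_of_not_lt (by simpa using hj)
      have : i - i₀ + 1 ≤ (j : ℤ) := by rw [← hm]; exact_mod_cast hj'
      nlinarith [Int.ofNat_nonneg j]
    -- each term is bounded by P.eval i
    have hterm : ∀ j ∈ Finset.range m, (b (i - (j : ℤ) * n) : ℝ) ≤ P.eval (i : ℝ) := by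
      intro j _
      set x : ℤ := i - (j : ℤ) * n with hx
      by_cases hbx : b x = 0
      · rw [hbx]; exact_mod_cast hPpos _ hiR
      have hxi₀ : i₀ ≤ x := by
        by_contra h
        exact hbx (hi₀ x (by omega))
      have hxle : x ≤ i := by
        have : 0 ≤ (j : ℤ) * n := mul_nonneg (Int.ofNat_nonneg j) (by omega)
        omega
      have habs : |(x : ℝ)| ≤ (i : ℝ) := by
        rw [abs_le]
        constructor
        · have : -|i₀| ≤ i₀ := neg_abs_le _
          push_cast
          have : -(i:ℤ) ≤ x := by omega
          exact_mod_cast this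
        · exact_mod_cast hxle
      by_cases hxN : x < N
      · -- bounded by C
        have hmem : x ∈ Finset.Icc i₀ N := Finset.mem_Icc.mpr ⟨hxi₀, le_of_lt hxN⟩
        have h1 : b x ≤ C := Finset.le_sup hmem
        have h2 : (C : ℝ) ≤ P.eval (i : ℝ) := by
          simp only [hP, Polynomial.eval_add, Polynomial.eval_C, Polynomial.eval_finset_sum,
            Polynomial.eval_mul, Polynomial.eval_pow, Polynomial.eval_X]
          have : 0 ≤ ∑ k ∈ Finset.range (d+1), |p.coeff k| * (i:ℝ)^k := by positivity
          linarith
        exact le_trans (by exact_mod_cast h1) h2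
      · push_neg at hxN
        have h1 : (b x : ℝ) ≤ p.eval (x : ℝ) := hpN x hxN
        have h2 : p.eval (x : ℝ) ≤ ∑ k ∈ Finset.range (d+1), |p.coeff k| * (i:ℝ)^k := by
          rw [Polynomial.eval_eq_sum_range' (Nat.lt_succ_of_le hpd)]
          apply le_trans (Finset.sum_le_sum (fun k _ => le_abs_self _))
          apply Finset.sum_le_sum
          intro k _
          rw [abs_mul, abs_pow]
          exact mul_le_mul_of_nonneg_left (pow_le_pow_left₀ (abs_nonneg _) habs k)
            (abs_nonneg _)
        have h3 : (∑ k ∈ Finset.range (d+1), |p.coeff k| * (i:ℝ)^k) ≤ P.eval (i:ℝ) := by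
          simp only [hP, Polynomial.eval_add, Polynomial.eval_C, Polynomial.eval_finset_sum,
            Polynomial.eval_mul, Polynomial.eval_pow, Polynomial.eval_X]
          have : (0:ℝ) ≤ C := Nat.cast_nonneg _
          linarith
        linarith
    -- combine
    have hsum : ((∑ j ∈ Finset.range m, b (i - (j : ℤ) * n) : ℕ) : ℝ)
        ≤ (m : ℝ) * P.eval (i : ℝ) := by
      push_cast
      calc ∑ j ∈ Finset.range m, ((b (i - (j : ℤ) * n) : ℝ))
          ≤ ∑ _j ∈ Finset.range m, P.eval (i : ℝ) := Finset.sum_le_sum hterm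
        _ = (m : ℝ) * P.eval (i : ℝ) := by
            rw [Finset.sum_const, Finset.card_range, nsmul_eq_mul]
    have hmle : (m : ℝ) ≤ (i : ℝ) + (|(i₀ : ℝ)| + 1) := by
      have hmR : (m : ℝ) = (i : ℝ) - (i₀ : ℝ) + 1 := by exact_mod_cast congrArg (Int.cast : ℤ → ℝ) hm
      have : -(|(i₀:ℝ)|) ≤ (i₀:ℝ) := neg_abs_le _
      linarith
    have hQeval : Q.eval (i : ℝ) = ((i : ℝ) + (|(i₀ : ℝ)| + 1)) * P.eval (i : ℝ) := by
      simp [hQ]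
    simp only [htsum]
    rw [hQeval]
    calc ((∑ j ∈ Finset.range m, b (i - (j : ℤ) * n) : ℕ) : ℝ)
        ≤ (m : ℝ) * P.eval (i : ℝ) := hsum
      _ ≤ ((i : ℝ) + (|(i₀ : ℝ)| + 1)) * P.eval (i : ℝ) :=
          mul_le_mul_of_nonneg_right hmle (hPpos _ hiR)
end

section
/- Let k be a field, n a nonzero integer, and d ≥ 0 an integer. Let M and N be cochain complexes of k-vector spaces that are locally finite and cohomologically bounded below, and suppose that in the derived category of k-vector spaces N is isomorphic to the mapping cone of a morphism χ : Σₙ M → M, where Σₙ denotes the cohomological shift with H^i(Σₙ M) = H^{i−n}(M). If the function i ↦ dim_k H^i(N) has polynomial growth of degree ≤ d, then the function i ↦ dim_k H^i(M) has polynomial growth of degree ≤ d + 1. -/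
open CategoryTheory

/-! ### Auxiliary polynomial lemmas -/

noncomputable section AuxGrowth

/-- The polynomial with absolute values of coefficients. -/
def absPoly (p : Polynomial ℝ) : Polynomial ℝ :=
  ∑ j ∈ Finset.range (p.natDegree + 1), Polynomial.C |p.coeff j| * Polynomial.X ^ j

lemma absPoly_natDegree_le (p : Polynomial ℝ) : (absPoly p).natDegree ≤ p.natDegree := by
  refine Polynomial.natDegree_sum_le_of_forall_le _ _ (fun j hj => ?_)
  simp only [Finset.mem_range] at hj
  refine le_trans (Polynomial.natDegree_C_mul_le _ _) ?_
  simpa using Nat.lt_succ_iff.mp hj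

lemma absPoly_eval_nonneg (p : Polynomial ℝ) {x : ℝ} (hx : 0 ≤ x) :
    0 ≤ (absPoly p).eval x := by
  rw [absPoly, Polynomial.eval_finset_sum]
  refine Finset.sum_nonneg (fun j _ => ?_)
  simp only [Polynomial.eval_mul, Polynomial.eval_C, Polynomial.eval_pow, Polynomial.eval_X]
  positivity

lemma eval_le_absPoly_eval (p : Polynomial ℝ) {a x : ℝ} (h : |a| ≤ x) :
    p.eval a ≤ (absPoly p).eval x := by
  have h0 : (0:ℝ) ≤ |a| := abs_nonneg a
  rw [absPoly, Polynomial.eval_finset_sum,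
    Polynomial.eval_eq_sum_range' (Nat.lt_succ_self _)]
  refine Finset.sum_le_sum (fun j _ => ?_)
  simp only [Polynomial.eval_mul, Polynomial.eval_C, Polynomial.eval_pow, Polynomial.eval_X]
  calc p.coeff j * a ^ j ≤ |p.coeff j * a ^ j| := le_abs_self _
    _ = |p.coeff j| * |a| ^ j := by rw [abs_mul, abs_pow]
    _ ≤ |p.coeff j| * x ^ j :=
        mul_le_mul_of_nonneg_left (pow_le_pow_left₀ h0 h j) (abs_nonneg _)

/-- The key arithmetic lemma: a recursion `g j ≤ g (j - m) + f (j - c)` together with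
vanishing of `g` below some bound boosts polynomial growth of `f` by one degree. -/
lemma hasPolyGrowth_of_rec {f g : ℤ → ℕ} {d : ℕ} (m c i₀ : ℤ) (hm : 1 ≤ m) (hc : 0 ≤ c)
    (hg0 : ∀ i < i₀, g i = 0)
    (hrec : ∀ j : ℤ, g j ≤ g (j - m) + f (j - c))
    (hf : HasPolyGrowth f d) : HasPolyGrowth g (d + 1) := by
  obtain ⟨p, hpd, N₀, hp⟩ := hf
  -- iterated bound
  have key : ∀ s : ℕ, ∀ j : ℤ, j < i₀ + s * m →
      g j ≤ ∑ t ∈ Finset.range s, f (j - c - t * m) := by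
    intro s
    induction s with
    | zero => intro j hj; simp only [Finset.range_zero, Finset.sum_empty]
              simp only [Nat.cast_zero, zero_mul, add_zero] at hj
              rw [hg0 j hj]
    | succ s ih =>
        intro j hj
        by_cases hji : j < i₀
        · rw [hg0 j hji]; exact Nat.zero_le _
        · have h2 : g (j - m) ≤ ∑ t ∈ Finset.range s, f (j - m - c - t * m) := by
            refine ih (j - m) ?_
            have : ((s:ℤ) + 1) * m = s * m + m := by ring
            push_cast at hj
            omega
          calc g j ≤ g (j - m) + f (j - c) := hrec j
            _ ≤ (∑ t ∈ Finset.range s, f (j - m - c - t * m)) + f (j - c) :=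
                Nat.add_le_add_right h2 _
            _ = ∑ t ∈ Finset.range (s + 1), f (j - c - t * m) := by
                rw [Finset.sum_range_succ']
                congr 1
                · refine Finset.sum_congr rfl (fun t _ => ?_)
                  congr 1
                  push_cast
                  ring
                · congr 1
                  push_cast
                  ring
  -- the constant for the finitely many low values
  set L : ℤ := i₀ - c with hL
  set K : ℕ := (Finset.Icc L N₀).sup f with hK
  have hKle : ∀ a : ℤ, L ≤ a → a ≤ N₀ → f a ≤ K :=
    fun a h1 h2 => Finset.le_sup (Finset.mem_Icc.mpr ⟨h1, h2⟩)
  -- the final polynomial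
  refine ⟨(Polynomial.X + Polynomial.C (1 - (i₀:ℝ))) * (Polynomial.C (K:ℝ) + absPoly p),
    ?_, max (max i₀ (|L| + 1)) (max N₀ 1), fun i hi => ?_⟩
  · refine le_trans (Polynomial.natDegree_mul_le) ?_
    have h1 : (Polynomial.X + Polynomial.C (1 - (i₀:ℝ))).natDegree ≤ 1 :=
      le_of_eq (Polynomial.natDegree_X_add_C _)
    have h2 : (Polynomial.C (K:ℝ) + absPoly p).natDegree ≤ d := by
      refine le_trans (Polynomial.natDegree_add_le _ _) ?_
      simp only [Polynomial.natDegree_C, Nat.zero_le, max_le_iff, true_and]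
      exact le_trans (absPoly_natDegree_le p) hpd
    omega
  · -- main estimate
    have hi₀ : i₀ ≤ i := le_trans (le_trans (le_max_left _ _) (le_max_left _ _)) hi
    have hiL : |L| + 1 ≤ i := le_trans (le_trans (le_max_right _ _) (le_max_left _ _)) hi
    have hi1 : 1 ≤ i := le_trans (le_trans (le_max_right _ _) (le_max_right _ _)) hi
    obtain ⟨mN, hmN'⟩ : ∃ mN : ℕ, (mN : ℤ) = m :=
      ⟨m.toNat, Int.toNat_of_nonneg (by omega)⟩
    have hmNpos : 0 < mN := by omega
    obtain ⟨t₀, ht₀'⟩ : ∃ t₀ : ℕ, (t₀ : ℤ) = i - i₀ :=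
      ⟨(i - i₀).toNat, Int.toNat_of_nonneg (by omega)⟩
    set s : ℕ := t₀ / mN + 1 with hs
    -- j < i₀ + s * m
    have hA : i < i₀ + s * m := by
      have h1 : t₀ < (t₀ / mN + 1) * mN := by
        have hdm := Nat.div_add_mod t₀ mN
        have hml := Nat.mod_lt t₀ hmNpos
        calc t₀ = mN * (t₀ / mN) + t₀ % mN := hdm.symm
          _ < mN * (t₀ / mN) + mN := by omega
          _ = (t₀ / mN + 1) * mN := by ring
      have h1' : (t₀ : ℤ) < (((t₀ / mN : ℕ) : ℤ) + 1) * (mN : ℤ) := by exact_mod_cast h1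
      rw [hmN'] at h1'
      have hsm : (s : ℤ) * m = (((t₀ / mN : ℕ) : ℤ) + 1) * m := by
        rw [hs]; push_cast; ring
      rw [hsm]
      linarith
    have hB : ((t₀ / mN : ℕ) : ℤ) * m ≤ i - i₀ := by
      have h1 : (t₀ / mN) * mN ≤ t₀ := Nat.div_mul_le_self t₀ mN
      have h1' : ((t₀ / mN : ℕ) : ℤ) * (mN : ℤ) ≤ (t₀ : ℤ) := by exact_mod_cast h1
      rw [hmN'] at h1'
      omega
    have hC : (s : ℤ) ≤ i - i₀ + 1 := by
      have : t₀ / mN ≤ t₀ := Nat.div_le_self _ _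
      omega
    -- bound each term of the sum
    have hterm : ∀ t : ℕ, t < s → (f (i - c - t * m) : ℝ) ≤ (K : ℝ) + (absPoly p).eval (i:ℝ) := by
      intro t ht
      set a : ℤ := i - c - t * m with ha
      have haup : a ≤ i := by
        have : (0:ℤ) ≤ (t:ℤ) * m := mul_nonneg (by positivity) (by omega)
        omega
      have halow : L ≤ a := by
        have h1 : (t : ℤ) ≤ ((t₀ / mN : ℕ) : ℤ) := by
          have := Nat.lt_succ_iff.mp (hs ▸ ht)
          exact_mod_cast this
        have h2 : (t:ℤ) * m ≤ ((t₀ / mN : ℕ) : ℤ) * m :=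
          mul_le_mul_of_nonneg_right h1 (by omega)
        omega
      have hq0 : (0:ℝ) ≤ (absPoly p).eval (i:ℝ) :=
        absPoly_eval_nonneg p (by exact_mod_cast (by omega : (0:ℤ) ≤ i))
      by_cases haN : N₀ ≤ a
      · have h1 : (f a : ℝ) ≤ p.eval (a : ℝ) := hp a haN
        have h2 : p.eval (a:ℝ) ≤ (absPoly p).eval (i:ℝ) := by
          refine eval_le_absPoly_eval p ?_
          rw [abs_le]
          constructor
          · have : -i ≤ L := by
              have : |L| ≤ i - 1 := by omega
              have := neg_abs_le L
              linarith [ (by exact_mod_cast (by omega : -i ≤ L) : (-(i:ℝ)) ≤ (L:ℝ)) ]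
            exact_mod_cast (by omega : -i ≤ a)
          · exact_mod_cast haup
        have : (0:ℝ) ≤ (K:ℝ) := Nat.cast_nonneg _
        linarith
      · have h1 : f a ≤ K := hKle a halow (by omega)
        have h1' : (f a : ℝ) ≤ (K : ℝ) := by exact_mod_cast h1
        linarith
    -- put it together
    have hsum : (g i : ℝ) ≤ (s : ℝ) * ((K : ℝ) + (absPoly p).eval (i:ℝ)) := by
      have h1 : g i ≤ ∑ t ∈ Finset.range s, f (i - c - t * m) := key s i hA
      have h2 : ((∑ t ∈ Finset.range s, f (i - c - t * m) : ℕ) : ℝ) =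
          ∑ t ∈ Finset.range s, (f (i - c - t * m) : ℝ) := by push_cast; rfl
      calc (g i : ℝ) ≤ ∑ t ∈ Finset.range s, (f (i - c - t * m) : ℝ) := by
            rw [← h2]; exact_mod_cast h1
        _ ≤ ∑ _t ∈ Finset.range s, ((K : ℝ) + (absPoly p).eval (i:ℝ)) :=
            Finset.sum_le_sum (fun t ht => hterm t (Finset.mem_range.mp ht))
        _ = (s : ℝ) * ((K : ℝ) + (absPoly p).eval (i:ℝ)) := by
            rw [Finset.sum_const, Finset.card_range, nsmul_eq_mul]
    have hfac : (0:ℝ) ≤ (K : ℝ) + (absPoly p).eval (i:ℝ) := by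
      have := absPoly_eval_nonneg p (x := (i:ℝ)) (by exact_mod_cast (by omega : (0:ℤ) ≤ i))
      have : (0:ℝ) ≤ (K:ℝ) := Nat.cast_nonneg _
      linarith [absPoly_eval_nonneg p (x := (i:ℝ)) (by exact_mod_cast (by omega : (0:ℤ) ≤ i))]
    have hsle : (s : ℝ) ≤ (i : ℝ) - i₀ + 1 := by
      have h : ((s:ℤ):ℝ) ≤ ((i - i₀ + 1 : ℤ):ℝ) := by exact_mod_cast hC
      push_cast at h ⊢
      convert h using 2
    have hfin := calc (g i : ℝ) ≤ (s : ℝ) * ((K : ℝ) + (absPoly p).eval (i:ℝ)) := hsum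
      _ ≤ ((i:ℝ) - i₀ + 1) * ((K : ℝ) + (absPoly p).eval (i:ℝ)) :=
          mul_le_mul_of_nonneg_right hsle hfac
      _ = ((Polynomial.X + Polynomial.C (1 - (i₀:ℝ))) *
            (Polynomial.C (K:ℝ) + absPoly p)).eval i := by
          simp only [Polynomial.eval_mul, Polynomial.eval_add, Polynomial.eval_X,
            Polynomial.eval_C]
          ring
    exact hfin

end AuxGrowth

/-! ### Auxiliary linear algebra lemmas for `ModuleCat` -/

noncomputable section AuxModule

variable {k : Type} [Field k]

lemma aux_subsingleton_of_isZero {A : ModuleCat k} (h : Limits.IsZero A) : Subsingleton A := by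
  have hid : (𝟙 A : A ⟶ A) = 0 := h.eq_of_src _ _
  refine ⟨fun a b => ?_⟩
  calc a = (𝟙 A : A ⟶ A) a := rfl
    _ = (0 : A ⟶ A) a := by rw [hid]
    _ = (0 : A →ₗ[k] A) a := rfl
    _ = (0 : A →ₗ[k] A) b := by simp
    _ = (0 : A ⟶ A) b := rfl
    _ = (𝟙 A : A ⟶ A) b := by rw [hid]
    _ = b := rfl

lemma aux_finrank_zero_of_isZero {A : ModuleCat k} (h : Limits.IsZero A) :
    Module.finrank k A = 0 := by
  have := aux_subsingleton_of_isZero h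
  exact Module.finrank_zero_of_subsingleton

lemma aux_finrank_eq_of_iso {A B : ModuleCat k} (e : A ≅ B) :
    Module.finrank k A = Module.finrank k B :=
  LinearEquiv.finrank_eq e.toLinearEquiv

lemma aux_fd_of_iso {A B : ModuleCat k} (e : A ≅ B) (h : FiniteDimensional k A) :
    FiniteDimensional k B :=
  Module.Finite.equiv e.toLinearEquiv

lemma aux_finrank_le_of_exact (S : ShortComplex (ModuleCat k)) (hS : S.Exact)
    (h1 : FiniteDimensional k S.X₁) (h2 : FiniteDimensional k S.X₂)
    (h3 : FiniteDimensional k S.X₃) :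
    Module.finrank k S.X₂ ≤ Module.finrank k S.X₁ + Module.finrank k S.X₃ := by
  have hker := hS.moduleCat_range_eq_ker
  have hrn := LinearMap.finrank_range_add_finrank_ker S.g.hom
  have e1 : Module.finrank k (LinearMap.ker S.g.hom) = Module.finrank k (LinearMap.range S.f.hom) := by
    rw [hker]
  have e2 : Module.finrank k (LinearMap.range S.f.hom) ≤ Module.finrank k S.X₁ :=
    LinearMap.finrank_range_le _
  have e3 : Module.finrank k (LinearMap.range S.g.hom) ≤ Module.finrank k S.X₃ :=
    Submodule.finrank_le _
  omega

end AuxModule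

/-- Growth lemma for mapping cones: if `M`, `N` are locally finite, cohomologically bounded below
cochain complexes of `k`-vector spaces, `n ≠ 0`, and in the derived category `N` is isomorphic to
the mapping cone of a morphism `χ : Σₙ M ⟶ M` (where `Σₙ M = M⟦-n⟧` is the cohomological shift
with `H^i(Σₙ M) = H^{i-n}(M)`), then polynomial growth of degree `≤ d` for `i ↦ dim_k H^i(N)`
implies polynomial growth of degree `≤ d + 1` for `i ↦ dim_k H^i(M)`. -/
theorem growth_of_cone (k : Type) [Field k] [HasDerivedCategory (ModuleCat k)]
    (n : ℤ) (hn : n ≠ 0) (d : ℕ)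
    (M N : CochainComplex (ModuleCat k) ℤ)
    (hMfin : ∀ i : ℤ, FiniteDimensional k (M.homology i))
    (hNfin : ∀ i : ℤ, FiniteDimensional k (N.homology i))
    (hMbdd : ∃ i₀ : ℤ, ∀ i < i₀, Limits.IsZero (M.homology i))
    (hNbdd : ∃ i₀ : ℤ, ∀ i < i₀, Limits.IsZero (N.homology i))
    (χ : (M⟦(-n : ℤ)⟧ : CochainComplex (ModuleCat k) ℤ) ⟶ M)
    (hiso : Nonempty (DerivedCategory.Q.obj N ≅
      DerivedCategory.Q.obj (CochainComplex.mappingCone χ)))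
    (hN : HasPolyGrowth (fun i : ℤ => Module.finrank k (N.homology i)) d) :
    HasPolyGrowth (fun i : ℤ => Module.finrank k (M.homology i)) (d + 1) := by
  obtain ⟨e⟩ := hiso
  obtain ⟨iM, hM0⟩ := hMbdd
  -- homology of N agrees with that of the mapping cone
  have eN : ∀ i : ℤ, N.homology i ≅ (CochainComplex.mappingCone χ).homology i := fun i =>
    ((DerivedCategory.homologyFunctorFactors (ModuleCat k) i).symm.app N) ≪≫
      (DerivedCategory.homologyFunctor (ModuleCat k) i).mapIso e ≪≫
      ((DerivedCategory.homologyFunctorFactors (ModuleCat k) i).app _)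
  -- homology computed in the homotopy category
  have eQ : ∀ (X : CochainComplex (ModuleCat k) ℤ) (i : ℤ),
      ((HomotopyCategory.homologyFunctor (ModuleCat k) (ComplexShape.up ℤ) 0).shift i).obj
        ((HomotopyCategory.quotient _ _).obj X) ≅ X.homology i := fun X i =>
    (HomotopyCategory.homologyFunctorFactors (ModuleCat k) (ComplexShape.up ℤ) i).app X
  -- homology of the shift
  have eShift : ∀ i : ℤ,
      ((M⟦(-n : ℤ)⟧ : CochainComplex (ModuleCat k) ℤ)).homology i ≅ M.homology (i - n) :=
    fun i => ((HomologicalComplex.homologyFunctor (ModuleCat k) (ComplexShape.up ℤ) 0).shiftIso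
      (-n) i (i - n) (by omega)).app M
  -- two segments of the long exact sequence
  have key1 : ∀ i : ℤ, Module.finrank k (M.homology i) ≤
      Module.finrank k (M.homology (i - n)) + Module.finrank k (N.homology i) := by
    intro i
    have hS := (HomotopyCategory.homologyFunctor (ModuleCat k)
      (ComplexShape.up ℤ) 0).homologySequence_exact₂ _
      (HomotopyCategory.mappingCone_triangleh_distinguished χ) i
    have e₁ : ((HomotopyCategory.homologyFunctor (ModuleCat k) (ComplexShape.up ℤ) 0).shift
        i).obj ((HomotopyCategory.quotient _ _).obj (M⟦(-n : ℤ)⟧)) ≅ M.homology (i - n) :=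
      eQ _ i ≪≫ eShift i
    have e₂ : ((HomotopyCategory.homologyFunctor (ModuleCat k) (ComplexShape.up ℤ) 0).shift
        i).obj ((HomotopyCategory.quotient _ _).obj M) ≅ M.homology i := eQ M i
    have e₃ : ((HomotopyCategory.homologyFunctor (ModuleCat k) (ComplexShape.up ℤ) 0).shift
        i).obj ((HomotopyCategory.quotient _ _).obj (CochainComplex.mappingCone χ)) ≅
        N.homology i := eQ _ i ≪≫ (eN i).symm
    have hle : Module.finrank k (((HomotopyCategory.homologyFunctor (ModuleCat k)
          (ComplexShape.up ℤ) 0).shift i).obj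
          ((HomotopyCategory.quotient _ _).obj M)) ≤
        Module.finrank k (((HomotopyCategory.homologyFunctor (ModuleCat k)
          (ComplexShape.up ℤ) 0).shift i).obj
          ((HomotopyCategory.quotient _ _).obj (M⟦(-n : ℤ)⟧))) +
        Module.finrank k (((HomotopyCategory.homologyFunctor (ModuleCat k)
          (ComplexShape.up ℤ) 0).shift i).obj
          ((HomotopyCategory.quotient _ _).obj (CochainComplex.mappingCone χ))) :=
      aux_finrank_le_of_exact _ hS (aux_fd_of_iso e₁.symm (hMfin _))
        (aux_fd_of_iso e₂.symm (hMfin _)) (aux_fd_of_iso e₃.symm (hNfin _))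
    calc Module.finrank k (M.homology i)
        = _ := aux_finrank_eq_of_iso e₂.symm
      _ ≤ _ := hle
      _ = _ := by rw [aux_finrank_eq_of_iso e₁, aux_finrank_eq_of_iso e₃]
  have key2 : ∀ i : ℤ, Module.finrank k (M.homology (i - n)) ≤
      Module.finrank k (N.homology (i - 1)) + Module.finrank k (M.homology i) := by
    intro i
    have hS := (HomotopyCategory.homologyFunctor (ModuleCat k)
      (ComplexShape.up ℤ) 0).homologySequence_exact₁ _
      (HomotopyCategory.mappingCone_triangleh_distinguished χ) (i - 1) i (by omega)
    have e₁ : ((HomotopyCategory.homologyFunctor (ModuleCat k) (ComplexShape.up ℤ) 0).shift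
        (i - 1)).obj ((HomotopyCategory.quotient _ _).obj (CochainComplex.mappingCone χ)) ≅
        N.homology (i - 1) := eQ _ (i - 1) ≪≫ (eN (i - 1)).symm
    have e₂ : ((HomotopyCategory.homologyFunctor (ModuleCat k) (ComplexShape.up ℤ) 0).shift
        i).obj ((HomotopyCategory.quotient _ _).obj (M⟦(-n : ℤ)⟧)) ≅ M.homology (i - n) :=
      eQ _ i ≪≫ eShift i
    have e₃ : ((HomotopyCategory.homologyFunctor (ModuleCat k) (ComplexShape.up ℤ) 0).shift
        i).obj ((HomotopyCategory.quotient _ _).obj M) ≅ M.homology i := eQ M i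
    have hle : Module.finrank k (((HomotopyCategory.homologyFunctor (ModuleCat k)
          (ComplexShape.up ℤ) 0).shift i).obj
          ((HomotopyCategory.quotient _ _).obj (M⟦(-n : ℤ)⟧))) ≤
        Module.finrank k (((HomotopyCategory.homologyFunctor (ModuleCat k)
          (ComplexShape.up ℤ) 0).shift (i - 1)).obj
          ((HomotopyCategory.quotient _ _).obj (CochainComplex.mappingCone χ))) +
        Module.finrank k (((HomotopyCategory.homologyFunctor (ModuleCat k)
          (ComplexShape.up ℤ) 0).shift i).obj
          ((HomotopyCategory.quotient _ _).obj M)) :=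
      aux_finrank_le_of_exact _ hS (aux_fd_of_iso e₁.symm (hNfin _))
        (aux_fd_of_iso e₂.symm (hMfin _)) (aux_fd_of_iso e₃.symm (hMfin _))
    calc Module.finrank k (M.homology (i - n))
        = _ := aux_finrank_eq_of_iso e₂.symm
      _ ≤ _ := hle
      _ = _ := by rw [aux_finrank_eq_of_iso e₁, aux_finrank_eq_of_iso e₃]
  -- boundedness below
  have hg0 : ∀ i : ℤ, i < iM → Module.finrank k (M.homology i) = 0 :=
    fun i hi => aux_finrank_zero_of_isZero (hM0 i hi)
  -- case disjunction on the sign of n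
  rcases lt_or_gt_of_ne hn with hneg | hpos
  · -- n < 0 : use key2
    refine hasPolyGrowth_of_rec (-n) (-n + 1) iM (by omega) (by omega) hg0 (fun j => ?_) hN
    have h := key2 (j + n)
    have h1 : j + n - n = j := by ring
    have h2 : j - -n = j + n := by ring
    have h3 : j - (-n + 1) = j + n - 1 := by ring
    rw [h1] at h
    rw [h2, h3]
    omega
  · -- n > 0 : use key1
    refine hasPolyGrowth_of_rec n 0 iM (by omega) (by omega) hg0 (fun j => ?_) hN
    have h := key1 j
    have h1 : j - 0 = j := by ring
    rw [h1]
    exact h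
end

section
/- Let R be a commutative ring and ζ ∈ R a nonzerodivisor; write Q = R/(ζ) and π : R → Q for the quotient map. Suppose there is a ring homomorphism σ : Q → R with π ∘ σ = id_Q. Then for every n ≥ 1 there is a ring isomorphism Q[t]/(tⁿ) ≅ R/(ζⁿ) sending the class of t to the class of ζ and, for every q ∈ Q, the class of the constant polynomial q to the class of σ(q). (This is the inductive step in the paper's Hochschild cohomology computation, showing R/(ζⁿ) ≅ Q[ζ]/(ζⁿ) as rings.) -/
private lemma surj_aux {R : Type*} [CommRing R] (ζ : R)
    (σ : R ⧸ Ideal.span {ζ} →+* R)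
    (hσ : (Ideal.Quotient.mk (Ideal.span {ζ})).comp σ = RingHom.id _) :
    ∀ (k : ℕ) (r : R), ∃ p : Polynomial (R ⧸ Ideal.span {ζ}),
      ζ ^ k ∣ r - Polynomial.eval₂ σ ζ p := by
  intro k
  induction k with
  | zero => intro r; exact ⟨0, by simp⟩
  | succ k ih =>
    intro r
    have h0 : Ideal.Quotient.mk (Ideal.span {ζ}) (r - σ (Ideal.Quotient.mk _ r)) = 0 := by
      have h := RingHom.congr_fun hσ (Ideal.Quotient.mk (Ideal.span {ζ}) r)
      simp only [RingHom.comp_apply, RingHom.id_apply] at h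
      rw [map_sub, h, sub_self]
    rw [Ideal.Quotient.eq_zero_iff_mem, Ideal.mem_span_singleton] at h0
    obtain ⟨r₁, hr₁⟩ := h0
    obtain ⟨p₁, c, hc⟩ := ih r₁
    refine ⟨Polynomial.C (Ideal.Quotient.mk _ r) + Polynomial.X * p₁, c, ?_⟩
    rw [Polynomial.eval₂_add, Polynomial.eval₂_mul, Polynomial.eval₂_C, Polynomial.eval₂_X]
    have : r - (σ ((Ideal.Quotient.mk (Ideal.span {ζ})) r) + ζ * Polynomial.eval₂ σ ζ p₁)
        = ζ * (r₁ - Polynomial.eval₂ σ ζ p₁) := by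
      rw [mul_sub, ← hr₁]; ring
    rw [this, hc, pow_succ]; ring

private lemma inj_aux {R : Type*} [CommRing R] (ζ : R)
    (hζ : ∀ x : R, ζ * x = 0 → x = 0)
    (σ : R ⧸ Ideal.span {ζ} →+* R)
    (hσ : (Ideal.Quotient.mk (Ideal.span {ζ})).comp σ = RingHom.id _) :
    ∀ (k : ℕ) (p : Polynomial (R ⧸ Ideal.span {ζ})),
      ζ ^ k ∣ Polynomial.eval₂ σ ζ p → (Polynomial.X : Polynomial (R ⧸ Ideal.span {ζ})) ^ k ∣ p := by
  intro k
  induction k with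
  | zero => intro p _; simp
  | succ k ih =>
    intro p hp
    obtain ⟨c, hc⟩ := hp
    have hsplit : p.divX * Polynomial.X + Polynomial.C (p.coeff 0) = p :=
      Polynomial.divX_mul_X_add p
    have hev : Polynomial.eval₂ σ ζ p
        = Polynomial.eval₂ σ ζ p.divX * ζ + σ (p.coeff 0) := by
      conv_lhs => rw [← hsplit]
      rw [Polynomial.eval₂_add, Polynomial.eval₂_mul, Polynomial.eval₂_X, Polynomial.eval₂_C]
    -- coeff 0 vanishes
    have hσa : σ (p.coeff 0) = ζ * (ζ ^ k * c - Polynomial.eval₂ σ ζ p.divX) := by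
      have : σ (p.coeff 0) = ζ ^ (k + 1) * c - Polynomial.eval₂ σ ζ p.divX * ζ := by
        rw [← hc, hev]; ring
      rw [this, pow_succ]; ring
    have ha0 : p.coeff 0 = 0 := by
      have h := RingHom.congr_fun hσ (p.coeff 0)
      simp only [RingHom.comp_apply, RingHom.id_apply] at h
      rw [← h, hσa, Ideal.Quotient.eq_zero_iff_mem, Ideal.mem_span_singleton]
      exact ⟨_, rfl⟩
    have hσa0 : σ (p.coeff 0) = 0 := by rw [ha0, map_zero]
    have hdiv : Polynomial.eval₂ σ ζ p.divX = ζ ^ k * c := by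
      have h1 : ζ * (Polynomial.eval₂ σ ζ p.divX - ζ ^ k * c) = 0 := by
        have : Polynomial.eval₂ σ ζ p = Polynomial.eval₂ σ ζ p.divX * ζ := by
          rw [hev, hσa0, add_zero]
        rw [mul_sub]
        rw [mul_comm ζ (Polynomial.eval₂ σ ζ p.divX), ← this, hc, pow_succ]
        ring
      have := hζ _ h1
      linear_combination this
    obtain ⟨d, hd⟩ := ih p.divX ⟨c, hdiv⟩
    refine ⟨d, ?_⟩
    rw [← hsplit, hd, ha0, map_zero, add_zero, pow_succ]
    ring

/-- Let `R` be a commutative ring, `ζ` a nonzerodivisor, `Q = R/(ζ)` with quotient map `π`,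
and suppose `π` admits a ring-theoretic section `σ : Q → R`.  Then for every `n ≥ 1` there is a
ring isomorphism `Q[t]/(tⁿ) ≅ R/(ζⁿ)` sending the class of `t` to the class of `ζ` and the class
of each constant `q` to the class of `σ q`. -/
theorem truncated_polynomial_iso {R : Type*} [CommRing R] (ζ : R)
    (hζ : ∀ x : R, ζ * x = 0 → x = 0)
    (σ : R ⧸ Ideal.span {ζ} →+* R)
    (hσ : (Ideal.Quotient.mk (Ideal.span {ζ})).comp σ = RingHom.id _)
    (n : ℕ) (hn : 1 ≤ n) :
    ∃ e : (Polynomial (R ⧸ Ideal.span {ζ}) ⧸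
        Ideal.span {(Polynomial.X : Polynomial (R ⧸ Ideal.span {ζ})) ^ n}) ≃+*
        (R ⧸ Ideal.span {ζ ^ n}),
      e (Ideal.Quotient.mk _ Polynomial.X) = Ideal.Quotient.mk _ ζ ∧
      ∀ q : R ⧸ Ideal.span {ζ},
        e (Ideal.Quotient.mk _ (Polynomial.C q)) = Ideal.Quotient.mk _ (σ q) := by
  set Q := R ⧸ Ideal.span {ζ}
  set S := R ⧸ Ideal.span {ζ ^ n}
  let mkJ : R →+* S := Ideal.Quotient.mk (Ideal.span {ζ ^ n})
  let φ : Polynomial Q →+* S := Polynomial.eval₂RingHom (mkJ.comp σ) (mkJ ζ)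
  have hφ : ∀ p : Polynomial Q, φ p = mkJ (Polynomial.eval₂ σ ζ p) := by
    intro p
    rw [Polynomial.hom_eval₂]
    rfl
  have hker : Ideal.span {(Polynomial.X : Polynomial Q) ^ n} ≤ RingHom.ker φ := by
    rw [Ideal.span_le, Set.singleton_subset_iff]
    show φ (Polynomial.X ^ n) = 0
    rw [hφ]
    rw [Polynomial.eval₂_pow, Polynomial.eval₂_X]
    rw [Ideal.Quotient.eq_zero_iff_mem, Ideal.mem_span_singleton]
  let e₀ : (Polynomial Q ⧸ Ideal.span {(Polynomial.X : Polynomial Q) ^ n}) →+* S :=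
    Ideal.Quotient.lift _ φ fun a ha => hker ha
  have hinj : Function.Injective e₀ := by
    rw [injective_iff_map_eq_zero]
    intro a ha
    obtain ⟨p, rfl⟩ := Ideal.Quotient.mk_surjective a
    have hp : φ p = 0 := ha
    rw [hφ, Ideal.Quotient.eq_zero_iff_mem, Ideal.mem_span_singleton] at hp
    rw [Ideal.Quotient.eq_zero_iff_mem, Ideal.mem_span_singleton]
    exact inj_aux ζ hζ σ hσ n p hp
  have hsurj : Function.Surjective e₀ := by
    intro s
    obtain ⟨r, rfl⟩ := Ideal.Quotient.mk_surjective s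
    obtain ⟨p, c, hc⟩ := surj_aux ζ σ hσ n r
    refine ⟨Ideal.Quotient.mk _ p, ?_⟩
    show φ p = Ideal.Quotient.mk _ r
    rw [hφ]
    rw [Ideal.Quotient.eq, Ideal.mem_span_singleton]
    exact ⟨-c, by linear_combination -hc⟩
  refine ⟨RingEquiv.ofBijective e₀ ⟨hinj, hsurj⟩, ?_, ?_⟩
  · show φ Polynomial.X = _
    rw [hφ, Polynomial.eval₂_X]
  · intro q
    show φ (Polynomial.C q) = _
    rw [hφ, Polynomial.eval₂_C]
end

section
/- Let R = ℚ[u,v,p]/(u², uv, up, p²). Then: (1) the radical of the principal ideal generated by (the image of) v equals the ideal generated by the images of u, v and p; and (2) the set of v-power-torsion elements of R, namely {x ∈ R : vⁿ x = 0 for some n ≥ 0}, is exactly the one-dimensional ℚ-subspace spanned by the image of u. (This computes the zeroth local cohomology H⁰_𝔪(R) = ℚ·u in the paper's h-Gorenstein example, showing R is not Cohen–Macaulay.) -/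
open MvPolynomial

/-- The variables `u`, `v`, `p` of `ℚ[u,v,p]`. -/
noncomputable def uPoly : MvPolynomial (Fin 3) ℚ := X 0
noncomputable def vPoly : MvPolynomial (Fin 3) ℚ := X 1
noncomputable def pPoly : MvPolynomial (Fin 3) ℚ := X 2

/-- The ideal `I = (u², uv, up, p²)` of `ℚ[u,v,p]`. -/
noncomputable def exIdeal : Ideal (MvPolynomial (Fin 3) ℚ) :=
  Ideal.span {uPoly ^ 2, uPoly * vPoly, uPoly * pPoly, pPoly ^ 2}

/-- The quotient ring `R = ℚ[u,v,p]/(u², uv, up, p²)`. -/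
noncomputable abbrev exRing : Type := MvPolynomial (Fin 3) ℚ ⧸ exIdeal

/-- The quotient map `ℚ[u,v,p] → R`. -/
noncomputable def mkEx : MvPolynomial (Fin 3) ℚ →+* exRing := Ideal.Quotient.mk exIdeal

/- ### Auxiliary lemmas -/

/-- Membership in the monomial ideal `(p²)`. -/
lemma mem_span_pSq {f : MvPolynomial (Fin 3) ℚ} :
    f ∈ Ideal.span {pPoly ^ 2} ↔ ∀ m ∈ f.support, 2 ≤ m 2 := by
  have h : ({pPoly ^ 2} : Set (MvPolynomial (Fin 3) ℚ)) =
      (fun s => monomial s (1 : ℚ)) '' {Finsupp.single 2 2} := by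
    simp [pPoly, X_pow_eq_monomial]
  rw [h, mem_ideal_span_monomial_image]
  simp [Finsupp.single_le_iff]

/-- `v` is regular modulo `(p²)`. -/
lemma pSq_regular {g : MvPolynomial (Fin 3) ℚ} {n : ℕ}
    (h : vPoly ^ n * g ∈ Ideal.span {pPoly ^ 2}) : g ∈ Ideal.span {pPoly ^ 2} := by
  rw [mem_span_pSq] at h ⊢
  intro m hm
  have hcoeff : coeff (Finsupp.single 1 n + m) (vPoly ^ n * g) = coeff m g := by
    rw [vPoly, X_pow_eq_monomial, coeff_monomial_mul, one_mul]
  have hmem : (Finsupp.single 1 n + m) ∈ (vPoly ^ n * g).support := by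
    rw [mem_support_iff, hcoeff]
    exact mem_support_iff.mp hm
  have h2 := h _ hmem
  rwa [Finsupp.add_apply, Finsupp.single_eq_of_ne (by decide), zero_add] at h2

/-- Membership in the ideal `(u, v, p)` is vanishing of the constant coefficient. -/
lemma mem_spanX {f : MvPolynomial (Fin 3) ℚ} :
    f ∈ Ideal.span {uPoly, vPoly, pPoly} ↔ constantCoeff f = 0 := by
  have hset : ({uPoly, vPoly, pPoly} : Set (MvPolynomial (Fin 3) ℚ)) =
      MvPolynomial.X '' Set.univ := by
    rw [Set.image_univ]
    ext g
    simp only [Set.mem_insert_iff, Set.mem_singleton_iff, Set.mem_range, uPoly, vPoly, pPoly]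
    constructor
    · rintro (rfl | rfl | rfl)
      exacts [⟨0, rfl⟩, ⟨1, rfl⟩, ⟨2, rfl⟩]
    · rintro ⟨i, rfl⟩
      fin_cases i
      · exact Or.inl rfl
      · exact Or.inr (Or.inl rfl)
      · exact Or.inr (Or.inr rfl)
  rw [hset, mem_ideal_span_X_image, constantCoeff_eq]
  constructor
  · intro h
    by_contra hc
    obtain ⟨i, -, hi⟩ := h 0 (mem_support_iff.mpr hc)
    simp at hi
  · intro h m hm
    by_contra hc
    push_neg at hc
    have hm0 : m = 0 := Finsupp.ext fun i => by simpa using hc i (Set.mem_univ i)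
    rw [mem_support_iff, hm0] at hm
    exact hm h

lemma spanX_isPrime : (Ideal.span {uPoly, vPoly, pPoly}).IsPrime := by
  have hker : Ideal.span {uPoly, vPoly, pPoly} =
      RingHom.ker (constantCoeff : MvPolynomial (Fin 3) ℚ →+* ℚ) := by
    ext f
    rw [mem_spanX, RingHom.mem_ker]
  rw [hker]
  exact RingHom.ker_isPrime _

lemma exIdeal_le_spanX : exIdeal ≤ Ideal.span {uPoly, vPoly, pPoly} := by
  have hu : uPoly ∈ Ideal.span {uPoly, vPoly, pPoly} := Ideal.subset_span (by simp)
  have hv : vPoly ∈ Ideal.span {uPoly, vPoly, pPoly} := Ideal.subset_span (by simp)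
  have hp : pPoly ∈ Ideal.span {uPoly, vPoly, pPoly} := Ideal.subset_span (by simp)
  rw [exIdeal, Ideal.span_le]
  rintro x hx
  simp only [Set.mem_insert_iff, Set.mem_singleton_iff] at hx
  rcases hx with rfl | rfl | rfl | rfl
  · rw [pow_two]; exact Ideal.mul_mem_left _ _ hu
  · exact Ideal.mul_mem_left _ _ hv
  · exact Ideal.mul_mem_left _ _ hp
  · rw [pow_two]; exact Ideal.mul_mem_left _ _ hp

lemma u_mul_mem {g : MvPolynomial (Fin 3) ℚ} (hg : g ∈ Ideal.span {uPoly, vPoly, pPoly}) :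
    uPoly * g ∈ exIdeal := by
  induction hg using Submodule.span_induction with
  | mem x hx =>
    rcases hx with rfl | rfl | rfl
    · rw [← pow_two]; exact Ideal.subset_span (by simp)
    · exact Ideal.subset_span (by simp)
    · exact Ideal.subset_span (by simp)
  | zero => rw [mul_zero]; exact zero_mem _
  | add x y hx hy hx' hy' => rw [mul_add]; exact add_mem hx' hy'
  | smul a x hx hx' =>
    rw [smul_eq_mul, show uPoly * (a * x) = a * (uPoly * x) by ring]
    exact Ideal.mul_mem_left _ _ hx'

/-- The substitution `u ↦ 0`. -/
noncomputable def eSub : MvPolynomial (Fin 3) ℚ →ₐ[ℚ] MvPolynomial (Fin 3) ℚ :=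
  aeval ![0, vPoly, pPoly]

lemma eSub_u : eSub uPoly = 0 := by simp [eSub, uPoly]
lemma eSub_v : eSub vPoly = vPoly := by simp [eSub, vPoly]
lemma eSub_p : eSub pPoly = pPoly := by simp [eSub, pPoly]

lemma u_dvd_sub (f : MvPolynomial (Fin 3) ℚ) : uPoly ∣ f - eSub f := by
  induction f using MvPolynomial.induction_on with
  | C a => simp [eSub]
  | add f g hf hg => simpa [add_sub_add_comm] using dvd_add hf hg
  | mul_X f i hf =>
    rw [map_mul]
    fin_cases i
    · show uPoly ∣ f * X 0 - eSub f * eSub (X 0)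
      rw [show X (0 : Fin 3) = uPoly from rfl, eSub_u, mul_zero, sub_zero]
      exact dvd_mul_left uPoly f
    · show uPoly ∣ f * X 1 - eSub f * eSub (X 1)
      rw [show X (1 : Fin 3) = vPoly from rfl, eSub_v, ← sub_mul]
      exact hf.mul_right _
    · show uPoly ∣ f * X 2 - eSub f * eSub (X 2)
      rw [show X (2 : Fin 3) = pPoly from rfl, eSub_p, ← sub_mul]
      exact hf.mul_right _

lemma exIdeal_killed {f : MvPolynomial (Fin 3) ℚ} (hf : f ∈ exIdeal) :
    eSub f ∈ Ideal.span {pPoly ^ 2} := by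
  have hle : exIdeal ≤ Ideal.comap eSub.toRingHom (Ideal.span {pPoly ^ 2}) := by
    rw [exIdeal, Ideal.span_le]
    rintro x hx
    simp only [Set.mem_insert_iff, Set.mem_singleton_iff] at hx
    have e1 : eSub.toRingHom (uPoly ^ 2) = 0 := by
      simp only [AlgHom.toRingHom_eq_coe, RingHom.coe_coe, map_pow, eSub_u]; ring
    have e2 : eSub.toRingHom (uPoly * vPoly) = 0 := by
      simp only [AlgHom.toRingHom_eq_coe, RingHom.coe_coe, map_mul, eSub_u]; ring
    have e3 : eSub.toRingHom (uPoly * pPoly) = 0 := by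
      simp only [AlgHom.toRingHom_eq_coe, RingHom.coe_coe, map_mul, eSub_u]; ring
    have e4 : eSub.toRingHom (pPoly ^ 2) = pPoly ^ 2 := by
      simp only [AlgHom.toRingHom_eq_coe, RingHom.coe_coe, map_pow, eSub_p]
    rcases hx with rfl | rfl | rfl | rfl
    · rw [SetLike.mem_coe, Ideal.mem_comap, e1]; exact zero_mem _
    · rw [SetLike.mem_coe, Ideal.mem_comap, e2]; exact zero_mem _
    · rw [SetLike.mem_coe, Ideal.mem_comap, e3]; exact zero_mem _
    · rw [SetLike.mem_coe, Ideal.mem_comap, e4]; exact Ideal.subset_span rfl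
  exact hle hf

lemma spanPSq_le_exIdeal : Ideal.span {pPoly ^ 2} ≤ exIdeal := by
  rw [Ideal.span_le]
  rintro x rfl
  exact Ideal.subset_span (by simp)

lemma mkEx_u_ne : mkEx uPoly ≠ 0 := by
  intro h
  have hu : uPoly ∈ exIdeal := Ideal.Quotient.eq_zero_iff_mem.mp h
  have hle : exIdeal ≤ Ideal.comap
      (aeval ![Polynomial.X, 0, 0] : MvPolynomial (Fin 3) ℚ →ₐ[ℚ] Polynomial ℚ).toRingHom
      (Ideal.span {(Polynomial.X : Polynomial ℚ) ^ 2}) := by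
    rw [exIdeal, Ideal.span_le]
    rintro x hx
    simp only [Set.mem_insert_iff, Set.mem_singleton_iff] at hx
    have t1 : (aeval ![Polynomial.X, 0, 0] : MvPolynomial (Fin 3) ℚ →ₐ[ℚ]
        Polynomial ℚ).toRingHom (uPoly ^ 2) = Polynomial.X ^ 2 := by
      simp [uPoly]
    have t2 : (aeval ![Polynomial.X, 0, 0] : MvPolynomial (Fin 3) ℚ →ₐ[ℚ]
        Polynomial ℚ).toRingHom (uPoly * vPoly) = 0 := by
      simp [uPoly, vPoly]
    have t3 : (aeval ![Polynomial.X, 0, 0] : MvPolynomial (Fin 3) ℚ →ₐ[ℚ]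
        Polynomial ℚ).toRingHom (uPoly * pPoly) = 0 := by
      simp [uPoly, pPoly]
    have t4 : (aeval ![Polynomial.X, 0, 0] : MvPolynomial (Fin 3) ℚ →ₐ[ℚ]
        Polynomial ℚ).toRingHom (pPoly ^ 2) = 0 := by
      simp [pPoly]
    rcases hx with rfl | rfl | rfl | rfl
    · rw [SetLike.mem_coe, Ideal.mem_comap, t1]; exact Ideal.subset_span rfl
    · rw [SetLike.mem_coe, Ideal.mem_comap, t2]; exact zero_mem _
    · rw [SetLike.mem_coe, Ideal.mem_comap, t3]; exact zero_mem _
    · rw [SetLike.mem_coe, Ideal.mem_comap, t4]; exact zero_mem _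
  have hX := hle hu
  simp only [Ideal.mem_comap, AlgHom.toRingHom_eq_coe, RingHom.coe_coe, uPoly, aeval_X,
    Matrix.cons_val_zero] at hX
  rw [Ideal.mem_span_singleton, Polynomial.X_pow_dvd_iff] at hX
  have h1 := hX 1 (by norm_num)
  simp at h1

/-- In `R = ℚ[u,v,p]/(u², uv, up, p²)`:
(1) the radical of the principal ideal `(v)` is the ideal `(u, v, p)` generated by the images of
all three variables, and
(2) the `v`-power-torsion elements `{x : vⁿ x = 0 for some n ≥ 0}` form exactly the
one-dimensional `ℚ`-subspace spanned by the image of `u`. -/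
theorem exRing_radical_and_torsion :
    (Ideal.span {mkEx vPoly}).radical = Ideal.span {mkEx uPoly, mkEx vPoly, mkEx pPoly} ∧
    {x : exRing | ∃ n : ℕ, (mkEx vPoly) ^ n * x = 0} =
      ↑(Submodule.span ℚ {mkEx uPoly} : Submodule ℚ exRing) ∧
    Module.finrank ℚ (Submodule.span ℚ {mkEx uPoly} : Submodule ℚ exRing) = 1 := by
  refine ⟨?_, ?_, ?_⟩
  · -- part 1 : radical (v) = (u,v,p)
    have hmap : Ideal.span {mkEx uPoly, mkEx vPoly, mkEx pPoly} =
        Ideal.map mkEx (Ideal.span {uPoly, vPoly, pPoly}) := by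
      rw [Ideal.map_span]
      congr 1
      simp [Set.image_insert_eq]
    have hprime : (Ideal.span {mkEx uPoly, mkEx vPoly, mkEx pPoly}).IsPrime := by
      rw [hmap]
      haveI := spanX_isPrime
      exact Ideal.map_isPrime_of_surjective Ideal.Quotient.mk_surjective
        (by rw [Ideal.mk_ker]; exact exIdeal_le_spanX)
    apply le_antisymm
    · rw [hprime.radical_le_iff, Ideal.span_le]
      rintro x rfl
      exact Ideal.subset_span (by simp)
    · rw [Ideal.span_le]
      rintro x hx
      simp only [Set.mem_insert_iff, Set.mem_singleton_iff] at hx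
      have hsq : ∀ g : MvPolynomial (Fin 3) ℚ, g ^ 2 ∈ exIdeal →
          mkEx g ∈ (Ideal.span {mkEx vPoly}).radical := by
        intro g hg
        refine ⟨2, ?_⟩
        rw [← map_pow, mkEx, Ideal.Quotient.eq_zero_iff_mem.mpr hg]
        exact zero_mem _
      rcases hx with rfl | rfl | rfl
      · exact hsq uPoly (Ideal.subset_span (by simp))
      · exact Ideal.le_radical (Ideal.subset_span rfl)
      · exact hsq pPoly (Ideal.subset_span (by simp))
  · -- part 2 : torsion = span ℚ {u}
    ext x
    simp only [Set.mem_setOf_eq, SetLike.mem_coe]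
    constructor
    · rintro ⟨n, hn⟩
      obtain ⟨f, rfl⟩ := Ideal.Quotient.mk_surjective (I := exIdeal) x
      have hmem : vPoly ^ n * f ∈ exIdeal := by
        rw [show (Ideal.Quotient.mk exIdeal) f = mkEx f from rfl, ← map_pow, ← map_mul] at hn
        exact Ideal.Quotient.eq_zero_iff_mem.mp hn
      have h2 : eSub f ∈ Ideal.span {pPoly ^ 2} := by
        apply pSq_regular (n := n)
        have he : eSub (vPoly ^ n * f) = vPoly ^ n * eSub f := by
          rw [map_mul, map_pow, eSub_v]
        rw [← he]
        exact exIdeal_killed hmem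
      have h3 : mkEx (eSub f) = 0 :=
        Ideal.Quotient.eq_zero_iff_mem.mpr (spanPSq_le_exIdeal h2)
      obtain ⟨q, hq⟩ := u_dvd_sub f
      have hx : mkEx f = mkEx (uPoly * q) := by
        have hf : f = eSub f + uPoly * q := by rw [← hq]; ring
        rw [hf, map_add, h3, zero_add]
      set c := constantCoeff q with hc
      have hq' : q - C c ∈ Ideal.span {uPoly, vPoly, pPoly} := by
        rw [mem_spanX]
        simp [hc]
      have h4 : uPoly * (q - C c) ∈ exIdeal := u_mul_mem hq'
      have hsm : mkEx (c • uPoly) = c • mkEx uPoly :=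
        Submodule.Quotient.mk_smul exIdeal c uPoly
      have h5 : mkEx (uPoly * q) = c • mkEx uPoly := by
        have hsplit : uPoly * q = uPoly * C c + uPoly * (q - C c) := by ring
        rw [hsplit, map_add, show mkEx (uPoly * (q - C c)) = 0 from
          Ideal.Quotient.eq_zero_iff_mem.mpr h4, add_zero, ← hsm, smul_eq_C_mul, mul_comm]
      rw [show (Ideal.Quotient.mk exIdeal) f = mkEx f from rfl, hx, h5]
      exact Submodule.smul_mem _ c (Submodule.mem_span_singleton_self _)
    · intro hx
      obtain ⟨c, rfl⟩ := Submodule.mem_span_singleton.mp hx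
      refine ⟨1, ?_⟩
      have hsm1 : c • mkEx uPoly = mkEx (c • uPoly) :=
        (Submodule.Quotient.mk_smul exIdeal c uPoly).symm
      have hsm2 : mkEx (c • (uPoly * vPoly)) = c • mkEx (uPoly * vPoly) :=
        Submodule.Quotient.mk_smul exIdeal c (uPoly * vPoly)
      rw [pow_one, hsm1, ← map_mul,
        show vPoly * (c • uPoly) = c • (uPoly * vPoly) by
          rw [smul_eq_C_mul, smul_eq_C_mul]; ring,
        hsm2, show mkEx (uPoly * vPoly) = 0 from
          Ideal.Quotient.eq_zero_iff_mem.mpr (Ideal.subset_span (by simp)), smul_zero]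
  · -- part 3 : finrank = 1
    exact finrank_span_singleton mkEx_u_ne
end
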